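/- For m ≥ 3 and i ≥ 2, the number of dominating sets of size i in the lollipop graph L_{m,1} equals C(m,i−1) + C(m−1,i−1). -/

import Mathlib

/-- A finite set of vertices dominates the graph. -/
def Dominates {V : Type*} (G : SimpleGraph V) (U : Finset V) : Prop :=
  ∀ v : V, v ∈ U ∨ ∃ u ∈ U, G.Adj u v

/-- The number of dominating sets of size `i`. -/
noncomputable def domCount {V : Type*} [Fintype V] (G : SimpleGraph V) (i : ℕ) : ℕ :=
  Nat.card {U : Finset V // U.card = i ∧ Dominates G U}

/-- The asymmetric adjacency relation of the lollipop graph `L_{m,n}`: a complete graph on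
`Fin m`, a path on `Fin n`, and an edge joining vertex `0` of the complete graph to
the endpoint `0` of the path. -/
def lollipopRel {m n : ℕ} : (Fin m ⊕ Fin n) → (Fin m ⊕ Fin n) → Prop
  | .inl a, .inl b => a ≠ b
  | .inl a, .inr i => (a : ℕ) = 0 ∧ (i : ℕ) = 0
  | .inr i, .inr j => (i : ℕ) + 1 = (j : ℕ)
  | _, _ => False

/-- The `(m,n)`-lollipop graph. -/
def lollipop (m n : ℕ) : SimpleGraph (Fin m ⊕ Fin n) :=
  SimpleGraph.fromRel lollipopRel

open Finset

namespace LollipopAux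

variable {m : ℕ}

/-- Embedding of `Fin m` into the vertex set. -/
def emb (m : ℕ) : Fin m ↪ (Fin m ⊕ Fin 1) := ⟨Sum.inl, Sum.inl_injective⟩

lemma adj_inl_inl {a b : Fin m} :
    (lollipop m 1).Adj (Sum.inl a) (Sum.inl b) ↔ a ≠ b := by
  simp only [lollipop, SimpleGraph.fromRel_adj, lollipopRel, ne_eq]
  constructor
  · rintro ⟨-, h | h⟩ <;> tauto
  · intro h; exact ⟨by simpa using h, Or.inl h⟩

lemma adj_inl_inr {a : Fin m} {j : Fin 1} :
    (lollipop m 1).Adj (Sum.inl a) (Sum.inr j) ↔ (a : ℕ) = 0 := by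
  simp only [lollipop, SimpleGraph.fromRel_adj, lollipopRel]
  constructor
  · rintro ⟨-, ⟨h, -⟩ | h⟩
    · exact h
    · exact h.elim
  · intro h
    exact ⟨by simp, Or.inl ⟨h, by omega⟩⟩

lemma not_adj_inr_inr {j k : Fin 1} :
    ¬ (lollipop m 1).Adj (Sum.inr j) (Sum.inr k) := by
  have : j = k := Subsingleton.elim _ _
  subst this
  exact (lollipop m 1).irrefl

lemma dom_iff (hm : 2 ≤ m) (U : Finset (Fin m ⊕ Fin 1)) :
    Dominates (lollipop m 1) U ↔
      (∃ a, Sum.inl a ∈ U) ∧ (Sum.inr 0 ∈ U ∨ Sum.inl (⟨0, by omega⟩ : Fin m) ∈ U) := by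
  constructor
  · intro h
    constructor
    · rcases h (Sum.inl (⟨1, by omega⟩ : Fin m)) with hv | ⟨u, hu, hadj⟩
      · exact ⟨_, hv⟩
      · rcases u with a | j
        · exact ⟨a, hu⟩
        · rw [(lollipop m 1).adj_comm] at hadj
          rw [adj_inl_inr] at hadj
          simp at hadj
    · rcases h (Sum.inr 0) with hv | ⟨u, hu, hadj⟩
      · exact Or.inl hv
      · rcases u with a | j
        · rw [adj_inl_inr] at hadj
          have : a = (⟨0, by omega⟩ : Fin m) := by
            apply Fin.ext; simpa using hadj
          exact Or.inr (this ▸ hu)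
        · exact absurd hadj not_adj_inr_inr
  · rintro ⟨⟨a, ha⟩, hp⟩ v
    rcases v with b | j
    · by_cases hab : a = b
      · exact Or.inl (hab ▸ ha)
      · exact Or.inr ⟨Sum.inl a, ha, adj_inl_inl.2 hab⟩
    · rcases hp with hp | hp
      · have : j = (0 : Fin 1) := Subsingleton.elim _ _
        exact Or.inl (this ▸ hp)
      · exact Or.inr ⟨_, hp, adj_inl_inr.2 rfl⟩

end LollipopAux

open LollipopAux in
theorem domCount_lollipop_one (m i : ℕ) (hm : 3 ≤ m) (hi : 2 ≤ i) :
    domCount (lollipop m 1) i = Nat.choose m (i - 1) + Nat.choose (m - 1) (i - 1) := by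
  classical
  haveI : NeZero m := ⟨by omega⟩
  set z : Fin m := ⟨0, by omega⟩ with hz
  set p : Fin m ⊕ Fin 1 := Sum.inr 0 with hpdef
  -- rewrite domCount as a Finset card
  have hcount : domCount (lollipop m 1) i =
      (univ.filter fun U : Finset (Fin m ⊕ Fin 1) =>
        U.card = i ∧ Dominates (lollipop m 1) U).card := by
    rw [domCount, Nat.card_eq_fintype_card, Fintype.card_subtype]
  set B1 : Finset (Finset (Fin m ⊕ Fin 1)) :=
    ((univ : Finset (Fin m)).powersetCard (i-1)).image
      (fun S => insert p (S.map (emb m))) with hB1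
  set B2 : Finset (Finset (Fin m ⊕ Fin 1)) :=
    (((univ : Finset (Fin m)).erase z).powersetCard (i-1)).image
      (fun S => insert (Sum.inl z) (S.map (emb m))) with hB2
  have hpmap : ∀ S : Finset (Fin m), p ∉ S.map (emb m) := by
    intro S hS
    simp [emb, hpdef] at hS
  have hzmap : ∀ S : Finset (Fin m), z ∉ S → Sum.inl z ∉ S.map (emb m) := by
    intro S hzS h
    simp only [mem_map, emb, Function.Embedding.coeFn_mk] at h
    obtain ⟨a, haS, hae⟩ := h
    exact hzS (Sum.inl_injective hae ▸ haS)
  have hset : (univ.filter fun U : Finset (Fin m ⊕ Fin 1) =>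
      U.card = i ∧ Dominates (lollipop m 1) U) = B1 ∪ B2 := by
    ext U
    simp only [mem_filter, mem_univ, true_and, mem_union, hB1, hB2, mem_image,
      mem_powersetCard, mem_powersetCard_univ]
    constructor
    · rintro ⟨hcard, hdom⟩
      rw [dom_iff (by omega)] at hdom
      obtain ⟨⟨a, ha⟩, hp⟩ := hdom
      by_cases hpU : p ∈ U
      · left
        have hU : U = insert p (U.toLeft.map (emb m)) := by
          ext x
          rcases x with b | j
          · simp [emb, hpdef, Finset.mem_toLeft]
          · have : j = (0 : Fin 1) := Subsingleton.elim _ _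
            subst this
            simp [emb, hpdef, hpU]
            exact hpU
        refine ⟨U.toLeft, ⟨fun x _ => mem_univ x, ?_⟩, hU.symm⟩
        have h2 := congrArg Finset.card hU
        rw [card_insert_of_notMem (hpmap _), card_map] at h2
        omega
      · right
        have hzU : Sum.inl z ∈ U := by
          rcases hp with hp | hp
          · exact absurd hp hpU
          · exact hp
        have hUeq : U = U.toLeft.map (emb m) := by
          ext x
          rcases x with b | j
          · simp [emb, Finset.mem_toLeft]
          · have : j = (0 : Fin 1) := Subsingleton.elim _ _
            subst this
            simp [emb, hpdef] at hpU ⊢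
            exact hpU
        have hzL : z ∈ U.toLeft := by
          rw [Finset.mem_toLeft]; exact hzU
        have hcardL : U.toLeft.card = i := by
          have h2 := congrArg Finset.card hUeq
          rw [card_map, hcard] at h2
          omega
        refine ⟨U.toLeft.erase z, ⟨?_, ?_⟩, ?_⟩
        · intro x hx
          simp only [mem_erase] at hx ⊢
          exact ⟨hx.1, mem_univ x⟩
        · rw [card_erase_of_mem hzL, hcardL]
        · rw [Finset.map_erase, ← hUeq]
          exact insert_erase hzU
    · rintro (⟨S, ⟨-, hScard⟩, rfl⟩ | ⟨S, ⟨hSsub, hScard⟩, rfl⟩)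
      · constructor
        · rw [card_insert_of_notMem (hpmap _), card_map, hScard]; omega
        · rw [dom_iff (by omega)]
          have hSne : S.Nonempty := by
            rw [← card_pos, hScard]; omega
          obtain ⟨a, haS⟩ := hSne
          refine ⟨⟨a, ?_⟩, Or.inl (mem_insert_self _ _)⟩
          exact mem_insert_of_mem (mem_map_of_mem _ haS)
      · have hzS : z ∉ S := fun h => (mem_erase.1 (hSsub h)).1 rfl
        constructor
        · rw [card_insert_of_notMem (hzmap _ hzS), card_map, hScard]; omega
        · rw [dom_iff (by omega)]
          exact ⟨⟨z, mem_insert_self _ _⟩, Or.inr (mem_insert_self _ _)⟩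
  have hdisj : Disjoint B1 B2 := by
    rw [disjoint_left]
    rintro U hU1 hU2
    simp only [hB1, hB2, mem_image] at hU1 hU2
    obtain ⟨S, -, rfl⟩ := hU1
    obtain ⟨T, hT, hTeq⟩ := hU2
    have hzT : z ∉ T := fun h => (mem_erase.1 ((mem_powersetCard.1 hT).1 h)).1 rfl
    have hpmem : p ∈ insert (Sum.inl z) (T.map (emb m)) := by
      rw [hTeq]; exact mem_insert_self _ _
    rcases mem_insert.1 hpmem with h | h
    · simp [hpdef] at h
    · exact hpmap _ h
  have hcard1 : B1.card = Nat.choose m (i - 1) := by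
    rw [hB1, card_image_of_injOn, card_powersetCard, card_univ, Fintype.card_fin]
    intro S hS T hT h
    have := congrArg (fun X => Finset.erase X p) h
    simp only [erase_insert (hpmap S), erase_insert (hpmap T)] at this
    exact Finset.map_injective _ this
  have hcard2 : B2.card = Nat.choose (m - 1) (i - 1) := by
    rw [hB2, card_image_of_injOn, card_powersetCard, card_erase_of_mem (mem_univ z),
      card_univ, Fintype.card_fin]
    intro S hS T hT h
    have hzS : z ∉ S := fun hx => (mem_erase.1 ((mem_powersetCard.1 hS).1 hx)).1 rfl
    have hzT : z ∉ T := fun hx => (mem_erase.1 ((mem_powersetCard.1 hT).1 hx)).1 rfl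
    have := congrArg (fun X => Finset.erase X (Sum.inl z)) h
    simp only [erase_insert (hzmap S hzS), erase_insert (hzmap T hzT)] at this
    exact Finset.map_injective _ this
  rw [hcount, hset, card_union_of_disjoint hdisj, hcard1, hcard2]
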